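/- Log-Hölder continuity of measures with nonnegative logarithmic potential: let μ be a finite positive Borel measure on ℂ whose support is contained in the closed ball of radius c ≥ 0 centered at 0, and assume that for every z ∈ ℂ the function z' ↦ log|z − z'| is μ-integrable with ∫_ℂ log|z − z'| dμ(z') ≥ 0. Then for every z ∈ ℂ and every radius ρ with 0 < ρ < 1, one has μ( B(z,ρ) ) · log(1/ρ) ≤ μ(ℂ) · log(1 + c + |z|), where B(z,ρ) is the open ball of radius ρ centered at z. -/

import Mathlib

open MeasureTheory

/-- Pointwise a.e. upper bound on the logarithmic kernel for a measure supported in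
`closedBall 0 c`. -/
lemma logKernel_ae_bound (μ : Measure ℂ)
    (c : ℝ) (hsupp : μ (Metric.closedBall (0 : ℂ) c)ᶜ = 0) (w : ℂ) :
    ∀ᵐ z' ∂μ, Real.log (‖w - z'‖) ≤ Real.log (1 + c + ‖w‖) := by
  have hmem : ∀ᵐ z' ∂μ, z' ∈ Metric.closedBall (0 : ℂ) c := by
    rw [ae_iff]
    exact hsupp
  filter_upwards [hmem] with z' hz'
  have hz'c : ‖z'‖ ≤ c := by simpa [Complex.dist_eq] using hz'
  have hle : ‖w - z'‖ ≤ c + ‖w‖ := by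
    calc ‖w - z'‖ ≤ ‖w‖ + ‖z'‖ := by
          simpa using norm_sub_le w z'
      _ ≤ c + ‖w‖ := by linarith
  have h1 : (1 : ℝ) ≤ 1 + c + ‖w‖ := by
    have := norm_nonneg w
    have hc' : 0 ≤ c := le_trans (norm_nonneg z') hz'c
    linarith
  rcases eq_or_lt_of_le (norm_nonneg (w - z')) with h0 | h0
  · rw [← h0, Real.log_zero]
    exact Real.log_nonneg h1
  · exact Real.log_le_log h0 (by linarith)

/-- Integral bound over any set from the a.e. kernel bound. -/
lemma setIntegral_logKernel_le (μ : Measure ℂ) [IsFiniteMeasure μ]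
    (c : ℝ) (hsupp : μ (Metric.closedBall (0 : ℂ) c)ᶜ = 0) (w : ℂ) (S : Set ℂ)
    (hint : Integrable (fun z' : ℂ => Real.log (‖w - z'‖)) μ) :
    ∫ z' in S, Real.log (‖w - z'‖) ∂μ
      ≤ (μ S).toReal * Real.log (1 + c + ‖w‖) := by
  have hae := logKernel_ae_bound μ c hsupp w
  have h := integral_mono_ae (hint.restrict (s := S))
    (integrable_const (Real.log (1 + c + ‖w‖)))
    (ae_restrict_of_ae hae)
  calc ∫ z' in S, Real.log (‖w - z'‖) ∂μ
      ≤ ∫ _ in S, Real.log (1 + c + ‖w‖) ∂μ := h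
    _ = (μ S).toReal * Real.log (1 + c + ‖w‖) := by
        rw [setIntegral_const]; ring_nf; rfl

theorem logHolder_of_nonneg_potential (μ : Measure ℂ) [IsFiniteMeasure μ]
    (c : ℝ) (hc : 0 ≤ c) (hsupp : μ (Metric.closedBall (0 : ℂ) c)ᶜ = 0)
    (hint : ∀ z : ℂ, Integrable (fun z' : ℂ => Real.log (‖z - z'‖)) μ)
    (hpos : ∀ z : ℂ, 0 ≤ ∫ z' : ℂ, Real.log (‖z - z'‖) ∂μ) :
    ∀ z : ℂ, ∀ ρ : ℝ, 0 < ρ → ρ < 1 →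
      (μ (Metric.ball z ρ)).toReal * Real.log (1 / ρ)
        ≤ (μ Set.univ).toReal * Real.log (1 + c + ‖z‖) := by
  intro z ρ hρ hρ1
  -- Step 1: μ has no atom at z.
  have hatom : μ {z} = 0 := by
    by_contra hne
    have ha : 0 < (μ {z}).toReal :=
      ENNReal.toReal_pos hne (measure_ne_top μ _)
    set a := (μ {z}).toReal with ha_def
    set M := (μ Set.univ).toReal * Real.log (2 + c + ‖z‖) with hM_def
    have hM0 : 0 ≤ M := by
      apply mul_nonneg ENNReal.toReal_nonneg
      apply Real.log_nonneg
      have := norm_nonneg z; linarith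
    set t := Real.exp (-(M + 1) / a) with ht_def
    have ht0 : 0 < t := Real.exp_pos _
    have hlogt : Real.log t = -(M + 1) / a := Real.log_exp _
    set w := z + (t : ℂ) with hw_def
    -- split the potential at w over {z} and its complement
    have hsplit : (∫ z' in ({z} : Set ℂ), Real.log (‖w - z'‖) ∂μ)
        + ∫ z' in ({z} : Set ℂ)ᶜ, Real.log (‖w - z'‖) ∂μ
        = ∫ z', Real.log (‖w - z'‖) ∂μ :=
      integral_add_compl (measurableSet_singleton z) (hint w)
    have hsingle : ∫ z' in ({z} : Set ℂ), Real.log (‖w - z'‖) ∂μ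
        = a * Real.log t := by
      rw [integral_singleton]
      have : ‖w - z‖ = t := by
        simp [hw_def, Complex.norm_real, abs_of_pos ht0]
      rw [this]; rfl
    have hcompl : ∫ z' in ({z} : Set ℂ)ᶜ, Real.log (‖w - z'‖) ∂μ ≤ M := by
      refine le_trans (setIntegral_logKernel_le μ c hsupp w _ (hint w)) ?_
      have h1 : (μ ({z} : Set ℂ)ᶜ).toReal ≤ (μ Set.univ).toReal :=
        ENNReal.toReal_mono (measure_ne_top μ _) (measure_mono (Set.subset_univ _))
      have h2 : Real.log (1 + c + ‖w‖) ≤ Real.log (2 + c + ‖z‖) := by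
        have hwle : ‖w‖ ≤ ‖z‖ + t := by
          simpa [hw_def, Complex.norm_real, abs_of_pos ht0] using
            norm_add_le z (t : ℂ)
        have ht1 : t ≤ 1 := by
          rw [ht_def]
          apply Real.exp_le_one_iff.mpr
          apply div_nonpos_of_nonpos_of_nonneg <;> [linarith; exact le_of_lt ha]
        apply Real.log_le_log
        · have := norm_nonneg w; linarith
        · linarith
      have hlog1 : 0 ≤ Real.log (1 + c + ‖w‖) := by
        apply Real.log_nonneg
        have := norm_nonneg w; linarith
      calc (μ ({z} : Set ℂ)ᶜ).toReal * Real.log (1 + c + ‖w‖)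
          ≤ (μ Set.univ).toReal * Real.log (2 + c + ‖z‖) :=
            mul_le_mul h1 h2 hlog1 ENNReal.toReal_nonneg
        _ = M := rfl
    have hp := hpos w
    rw [← hsplit, hsingle] at hp
    rw [hlogt] at hp
    have : a * (-(M + 1) / a) = -(M + 1) := by field_simp
    rw [this] at hp
    linarith
  -- Step 2: main estimate.
  set B := Metric.ball z ρ with hB_def
  have hsplit : (∫ z' in B, Real.log (‖z - z'‖) ∂μ)
      + ∫ z' in Bᶜ, Real.log (‖z - z'‖) ∂μ
      = ∫ z', Real.log (‖z - z'‖) ∂μ :=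
    integral_add_compl Metric.isOpen_ball.measurableSet (hint z)
  have hball : ∫ z' in B, Real.log (‖z - z'‖) ∂μ
      ≤ (μ B).toReal * Real.log ρ := by
    have hne : ∀ᵐ z' ∂μ, z' ≠ z := by
      rw [ae_iff]
      simpa using hatom
    have hae : ∀ᵐ z' ∂(μ.restrict B),
        Real.log (‖z - z'‖) ≤ Real.log ρ := by
      have hmem : ∀ᵐ z' ∂(μ.restrict B), z' ∈ B :=
        ae_restrict_mem Metric.isOpen_ball.measurableSet
      filter_upwards [hmem, ae_restrict_of_ae hne] with z' hz' hz'ne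
      have hlt : ‖z - z'‖ < ρ := by
        have : dist z' z < ρ := hz'
        rw [Complex.dist_eq] at this
        simpa [norm_sub_rev] using this
      have hpos' : 0 < ‖z - z'‖ :=
        norm_pos_iff.mpr (sub_ne_zero_of_ne hz'ne.symm)
      exact Real.log_le_log hpos' (le_of_lt hlt)
    have h := integral_mono_ae ((hint z).restrict (s := B))
      (integrable_const (Real.log ρ)) hae
    calc ∫ z' in B, Real.log (‖z - z'‖) ∂μ
        ≤ ∫ _ in B, Real.log ρ ∂μ := h
      _ = (μ B).toReal * Real.log ρ := by rw [setIntegral_const]; rfl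
  have hcompl : ∫ z' in Bᶜ, Real.log (‖z - z'‖) ∂μ
      ≤ (μ Set.univ).toReal * Real.log (1 + c + ‖z‖) := by
    refine le_trans (setIntegral_logKernel_le μ c hsupp z _ (hint z)) ?_
    have h1 : (μ Bᶜ).toReal ≤ (μ Set.univ).toReal :=
      ENNReal.toReal_mono (measure_ne_top μ _) (measure_mono (Set.subset_univ _))
    have hlog1 : 0 ≤ Real.log (1 + c + ‖z‖) := by
      apply Real.log_nonneg
      have := norm_nonneg z; linarith
    exact mul_le_mul_of_nonneg_right h1 hlog1
  have hp := hpos z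
  rw [← hsplit] at hp
  have hlog : Real.log (1 / ρ) = -Real.log ρ := by
    rw [one_div, Real.log_inv]
  rw [hlog]
  nlinarith [hp, hball, hcompl]
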